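/- Let U = −I be the n×n negative identity payoff matrix for the row player, and let P be any (possibly mixed) portfolio of k column strategies, k < n. Then the pessimistic exploitability of P is at least (n−k)/(nk): in the restricted game (an n×k matrix game) there exists a Nash equilibrium row strategy whose support has size at most k, hence some pure row strategy i is played with probability at least 1/k, and the column player responding with pure column i in the full game gives the row player payoff at most −1/k, while the full-game value is −1/n. -/

import Mathlib

open Finset Matrix

noncomputable section

/-- Mixed strategies over a finite action set. -/
def simplex (α : Type*) [Fintype α] : Set (α → ℝ) :=
  {x | (∀ i, 0 ≤ x i) ∧ ∑ i, x i = 1}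

/-- Expected payoff to the row (maximizing) player. -/
def pay {α β : Type*} [Fintype α] [Fintype β]
    (U : Matrix α β ℝ) (x : α → ℝ) (y : β → ℝ) : ℝ :=
  ∑ i, ∑ j, x i * U i j * y j

/-- Nash equilibrium of the zero-sum game with row payoff matrix `U`. -/
def isNash {α β : Type*} [Fintype α] [Fintype β]
    (U : Matrix α β ℝ) (x : α → ℝ) (y : β → ℝ) : Prop :=
  x ∈ simplex α ∧ y ∈ simplex β ∧
  (∀ x' ∈ simplex α, pay U x' y ≤ pay U x y) ∧
  (∀ y' ∈ simplex β, pay U x y ≤ pay U x y')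

/-- Worst-case (over pure columns) payoff of row strategy `x`. -/
def wc {α β : Type*} [Fintype α] [Fintype β]
    (U : Matrix α β ℝ) (x : α → ℝ) : ℝ :=
  sInf (Set.range fun j : β => ∑ i, x i * U i j)

end


open Pointwise in
/-- von Neumann-type duality. -/
lemma duality {n k : ℕ} (hn : 0 < n) (hk : 0 < k) (P : Matrix (Fin n) (Fin k) ℝ) :
    ∃ c : ℝ, ∃ x ∈ stdSimplex ℝ (Fin n), ∃ y ∈ stdSimplex ℝ (Fin k),
      (∀ z, ∑ i, x i * P i z ≤ c) ∧ (∀ i, c ≤ ∑ z, P i z * y z) := by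
  haveI : NeZero k := ⟨hk.ne'⟩
  haveI : NeZero n := ⟨hn.ne'⟩
  have hne : (Finset.univ : Finset (Fin k)).Nonempty := univ_nonempty
  have hnen : (Finset.univ : Finset (Fin n)).Nonempty := univ_nonempty
  -- the value function
  set g : (Fin n → ℝ) → ℝ := fun x => univ.sup' hne (fun z => ∑ i, x i * P i z) with hg
  have hcz : ∀ z : Fin k, Continuous (fun x : Fin n → ℝ => ∑ i, x i * P i z) := fun z =>
    continuous_finset_sum _ fun i _ => (continuous_apply i).mul continuous_const
  have hgc : Continuous g := by
    rw [continuous_iff_continuousAt]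
    intro x
    exact ContinuousAt.finset_sup'_apply hne (fun z _ => (hcz z).continuousAt)
  -- minimizer
  obtain ⟨x, hxΔ, hxmin⟩ := (isCompact_stdSimplex ℝ (Fin n)).exists_isMinOn
    ⟨_, ite_eq_mem_stdSimplex ℝ (0 : Fin n)⟩ hgc.continuousOn
  set c := g x with hc
  have hxle : ∀ z, ∑ i, x i * P i z ≤ c := by
    intro z
    rw [hc, hg]
    exact Finset.le_sup' (fun z => ∑ i, x i * P i z) (mem_univ z)
  -- dual side via separation
  set T : (Fin k → ℝ) → (Fin n → ℝ) := fun y => fun i => ∑ z, P i z * y z with hT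
  set D : Set (Fin n → ℝ) := T '' stdSimplex ℝ (Fin k) with hD
  set N : Set (Fin n → ℝ) := {s | ∀ i, s i ≤ 0} with hN
  have hTcont : Continuous T :=
    continuous_pi fun i => continuous_finset_sum _ fun z _ => continuous_const.mul (continuous_apply z)
  have hDcomp : IsCompact D := (isCompact_stdSimplex ℝ _).image hTcont
  have hTlin : IsLinearMap ℝ T := by
    constructor
    · intro a b; funext i
      simp only [hT, Pi.add_apply, mul_add, Finset.sum_add_distrib]
    · intro r a; funext i
      simp only [hT, Pi.smul_apply, smul_eq_mul, Finset.mul_sum]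
      exact Finset.sum_congr rfl fun z _ => by ring
  have hDconv : Convex ℝ D := (convex_stdSimplex ℝ _).is_linear_image hTlin
  have hNclosed : IsClosed N := by
    have : N = ⋂ i, {s : Fin n → ℝ | s i ≤ 0} := by
      ext s; simp [hN, Set.mem_iInter]
    rw [this]
    exact isClosed_iInter fun i => isClosed_le (continuous_apply i) continuous_const
  have hNconv : Convex ℝ N := by
    intro a ha b hb p q hp hq hpq i
    have := ha i; have := hb i
    simp only [Pi.add_apply, Pi.smul_apply, smul_eq_mul]
    nlinarith [ha i, hb i]
  have hCclosed : IsClosed (D + N) := IsClosed.add_left_of_isCompact hNclosed hDcomp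
  have hCconv : Convex ℝ (D + N) := hDconv.add hNconv
  have hzN : (0 : Fin n → ℝ) ∈ N := fun i => le_refl 0
  have hcolD : ∀ z : Fin k, (fun i => P i z) ∈ D := by
    intro z
    refine ⟨fun z' => if z = z' then 1 else 0, ite_eq_mem_stdSimplex ℝ z, ?_⟩
    funext i
    simp [hT, mul_ite, Finset.sum_ite_eq]
  -- key claim
  have hmem : (fun _ : Fin n => c) ∈ D + N := by
    by_contra hmem
    obtain ⟨f, u, hfu, hcu⟩ := geometric_hahn_banach_closed_point hCconv hCclosed hmem
    set w : Fin n → ℝ := fun i => f (fun j => if i = j then 1 else 0) with hw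
    have hf_repr : ∀ a : Fin n → ℝ, f a = ∑ i, a i * w i := by
      intro a
      simpa [smul_eq_mul] using LinearMap.pi_apply_eq_sum_univ (f : (Fin n → ℝ) →ₗ[ℝ] ℝ) a
    have hDlt : ∀ a ∈ D, f a < u := fun a ha => hfu a (by
      simpa using Set.add_mem_add ha hzN)
    -- w is nonnegative
    have hwpos : ∀ i, 0 ≤ w i := by
      intro i
      by_contra hwi
      push_neg at hwi
      set q0 : Fin n → ℝ := fun i => P i 0 with hq0
      have hq0D : q0 ∈ D := hcolD 0
      set M : ℝ := max 0 ((u + 1 - f q0) / (-w i)) with hM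
      have hM0 : 0 ≤ M := le_max_left _ _
      have hsmem : (-M) • (fun j => if i = j then (1:ℝ) else 0) ∈ N := by
        intro j
        simp only [Pi.smul_apply, smul_eq_mul]
        by_cases h : i = j <;> simp [h] <;> linarith
      have haC : q0 + (-M) • (fun j => if i = j then (1:ℝ) else 0) ∈ D + N :=
        Set.add_mem_add hq0D hsmem
      have hfa : f (q0 + (-M) • (fun j => if i = j then (1:ℝ) else 0)) = f q0 - M * w i := by
        rw [map_add, ContinuousLinearMap.map_smul]
        simp only [smul_eq_mul, ← hw]
        ring
      have hlt := hfu _ haC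
      rw [hfa] at hlt
      have hMge : (u + 1 - f q0) / (-w i) ≤ M := le_max_right _ _
      have hwineg : 0 < -w i := by linarith
      have : u + 1 - f q0 ≤ M * (-w i) := by
        rw [div_le_iff₀ hwineg] at hMge
        linarith
      nlinarith
    have hfc : f (fun _ : Fin n => c) = c * ∑ i, w i := by
      rw [hf_repr]
      rw [Finset.mul_sum]
    have hWpos : 0 < ∑ i, w i := by
      rcases lt_or_eq_of_le (Finset.sum_nonneg fun i _ => hwpos i) with h | h
      · exact h
      · exfalso
        have hq0D : (fun i => P i 0) ∈ D := hcolD 0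
        have h1 := hDlt _ hq0D
        have h2 : u < c * ∑ i, w i := by rw [← hfc]; exact hcu
        have hall : ∀ i ∈ Finset.univ, w i = 0 :=
          (Finset.sum_eq_zero_iff_of_nonneg fun i _ => hwpos i).1 h.symm
        rw [hf_repr] at h1
        have : ∑ i, P i 0 * w i = 0 := Finset.sum_eq_zero fun i hi => by rw [hall i hi]; ring
        rw [this] at h1
        rw [← h] at h2
        linarith
    -- normalized w beats the minimum: contradiction
    set W := ∑ i, w i with hW
    set xt : Fin n → ℝ := fun i => w i / W with hxt
    have hxtΔ : xt ∈ stdSimplex ℝ (Fin n) := by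
      constructor
      · intro i; exact div_nonneg (hwpos i) hWpos.le
      · rw [← Finset.sum_div]; exact div_self hWpos.ne'
    have hgxt : g xt < c := by
      rw [hg]
      rw [Finset.sup'_lt_iff]
      intro z _
      have h1 : f (fun i => P i z) < u := hDlt _ (hcolD z)
      rw [hf_repr] at h1
      have h2 : u < c * W := by rw [← hfc]; exact hcu
      have : ∑ i, xt i * P i z = (∑ i, P i z * w i) / W := by
        rw [eq_div_iff hWpos.ne', Finset.sum_mul]
        refine Finset.sum_congr rfl fun i _ => ?_
        rw [hxt]
        field_simp
      rw [this]
      rw [div_lt_iff₀ hWpos]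
      calc ∑ i, P i z * w i < u := h1
        _ < c * W := h2
    have := hxmin hxtΔ
    simp only [Set.mem_setOf_eq] at this
    exact absurd (lt_of_le_of_lt this hgxt) (lt_irrefl _)
  -- extract y
  rw [Set.mem_add] at hmem
  obtain ⟨q, hqD, s, hsN, hqs⟩ := hmem
  obtain ⟨y, hyΔ, rfl⟩ := hqD
  refine ⟨c, x, hxΔ, y, hyΔ, hxle, ?_⟩
  intro i
  have := congrFun hqs i
  simp only [Pi.add_apply] at this
  have hsi := hsN i
  simp only [hT] at this ⊢
  linarith

/-- One pivot step: if the support is bigger than k, we can shrink it while staying optimal. -/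
lemma pivot_step {n k : ℕ} (P : Matrix (Fin n) (Fin k) ℝ) (c : ℝ) (hc : c ≠ 0)
    (y : Fin k → ℝ) (hy : y ∈ stdSimplex ℝ (Fin k)) (hyc : ∀ i, c ≤ ∑ z, P i z * y z)
    (x : Fin n → ℝ) (hx : x ∈ stdSimplex ℝ (Fin n)) (hxc : ∀ z, ∑ i, x i * P i z ≤ c)
    (hcard : k < (Finset.univ.filter (fun i => x i ≠ 0)).card) :
    ∃ x' ∈ stdSimplex ℝ (Fin n), (∀ z, ∑ i, x' i * P i z ≤ c) ∧
      (Finset.univ.filter (fun i => x' i ≠ 0)).card <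
        (Finset.univ.filter (fun i => x i ≠ 0)).card := by
  set S := Finset.univ.filter (fun i => x i ≠ 0) with hS
  have hxpos : ∀ i ∈ S, 0 < x i := by
    intro i hi
    rw [hS, Finset.mem_filter] at hi
    exact lt_of_le_of_ne (hx.1 i) (Ne.symm hi.2)
  have hxS0 : ∀ i ∉ S, x i = 0 := by
    intro i hi
    rw [hS, Finset.mem_filter] at hi
    push_neg at hi
    exact hi (Finset.mem_univ i)
  -- complementary slackness: on the support, (Py)_i = c
  have hcs : ∀ i ∈ S, ∑ z, P i z * y z = c := by
    have e1 : ∑ i, x i * ∑ z, P i z * y z = ∑ z, (∑ i, x i * P i z) * y z := by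
      calc ∑ i, x i * ∑ z, P i z * y z
          = ∑ i, ∑ z, x i * (P i z * y z) := by simp_rw [Finset.mul_sum]
        _ = ∑ z, ∑ i, x i * (P i z * y z) := Finset.sum_comm
        _ = ∑ z, (∑ i, x i * P i z) * y z := by
            refine Finset.sum_congr rfl fun z _ => ?_
            rw [Finset.sum_mul]
            exact Finset.sum_congr rfl fun i _ => by ring
    have h1 : ∑ i, x i * ∑ z, P i z * y z ≤ c := by
      rw [e1]
      calc ∑ z, (∑ i, x i * P i z) * y z ≤ ∑ z, c * y z :=
            Finset.sum_le_sum fun z _ => mul_le_mul_of_nonneg_right (hxc z) (hy.1 z)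
        _ = c := by rw [← Finset.mul_sum, hy.2, mul_one]
    have h3 : ∑ i, x i * ((∑ z, P i z * y z) - c) ≤ 0 := by
      have : ∑ i, x i * ((∑ z, P i z * y z) - c)
          = (∑ i, x i * ∑ z, P i z * y z) - (∑ i, x i) * c := by
        rw [Finset.sum_mul, ← Finset.sum_sub_distrib]
        exact Finset.sum_congr rfl fun i _ => by ring
      rw [this, hx.2, one_mul]
      linarith
    have h4 : ∑ i, x i * ((∑ z, P i z * y z) - c) = 0 :=
      le_antisymm h3 (Finset.sum_nonneg fun i _ =>
        mul_nonneg (hx.1 i) (by linarith [hyc i]))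
    intro i hi
    have := (Finset.sum_eq_zero_iff_of_nonneg (fun i _ =>
      mul_nonneg (hx.1 i) (by linarith [hyc i] : (0:ℝ) ≤ (∑ z, P i z * y z) - c))).1 h4 i
      (Finset.mem_univ i)
    have hxi := hxpos i hi
    nlinarith [this]
  -- a nonzero kernel direction supported on S
  have hkerd : ∃ d0 : {i // i ∈ S} → ℝ, d0 ≠ 0 ∧ ∀ z, ∑ i, P i.1 z * d0 i = 0 := by
    let φ : ({i // i ∈ S} → ℝ) →ₗ[ℝ] (Fin k → ℝ) :=
      { toFun := fun d => fun z => ∑ i, P i.1 z * d i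
        map_add' := fun a b => by
          funext z
          simp only [Pi.add_apply, mul_add, Finset.sum_add_distrib]
        map_smul' := fun r a => by
          funext z
          simp only [Pi.smul_apply, smul_eq_mul, RingHom.id_apply, Finset.mul_sum]
          exact Finset.sum_congr rfl fun i _ => by ring }
    by_contra hcon
    push_neg at hcon
    have hinj : Function.Injective φ := by
      rw [← LinearMap.ker_eq_bot]
      by_contra hne
      obtain ⟨d0, hd0mem, hd0ne⟩ := (Submodule.ne_bot_iff _).1 hne
      obtain ⟨z, hz⟩ := hcon d0 hd0ne
      exact hz (congrFun (LinearMap.mem_ker.1 hd0mem) z)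
    have hle := LinearMap.finrank_le_finrank_of_injective hinj
    rw [Module.finrank_pi, Module.finrank_pi] at hle
    simp only [Fintype.card_coe, Fintype.card_fin] at hle
    omega
  obtain ⟨d0, hd0ne, hd0ker⟩ := hkerd
  set d : Fin n → ℝ := fun i => if h : i ∈ S then d0 ⟨i, h⟩ else 0 with hd
  have hdS0 : ∀ i ∉ S, d i = 0 := fun i hi => by rw [hd]; exact dif_neg hi
  have hdval : ∀ (i : {i // i ∈ S}), d i.1 = d0 i := fun i => by
    rw [hd]; exact dif_pos i.2
  have hsum_eq : ∀ (f : Fin n → ℝ), (∀ i ∉ S, f i = 0) → ∑ i, f i = ∑ i : {i // i ∈ S}, f i.1 := by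
    intro f hf
    rw [Finset.sum_coe_sort S (fun i => f i)]
    exact (Finset.sum_subset (Finset.subset_univ S) (fun i _ hi => hf i hi)).symm
  have hPd : ∀ z, ∑ i, d i * P i z = 0 := by
    intro z
    rw [hsum_eq (fun i => d i * P i z) (fun i hi => by
      show d i * P i z = 0
      rw [hdS0 i hi, zero_mul])]
    rw [← hd0ker z]
    exact Finset.sum_congr rfl fun i _ => by rw [hdval i]; ring
  have hdsum : ∑ i, d i = 0 := by
    have key : c * ∑ i, d i = 0 := by
      have e2 : c * ∑ i, d i = ∑ i, d i * ∑ z, P i z * y z := by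
        rw [Finset.mul_sum]
        refine Finset.sum_congr rfl fun i _ => ?_
        by_cases hi : i ∈ S
        · rw [hcs i hi]; ring
        · rw [hdS0 i hi]; ring
      have e3 : ∑ i, d i * ∑ z, P i z * y z = ∑ z, (∑ i, d i * P i z) * y z := by
        calc ∑ i, d i * ∑ z, P i z * y z
            = ∑ i, ∑ z, d i * (P i z * y z) := by simp_rw [Finset.mul_sum]
          _ = ∑ z, ∑ i, d i * (P i z * y z) := Finset.sum_comm
          _ = ∑ z, (∑ i, d i * P i z) * y z := by
              refine Finset.sum_congr rfl fun z _ => ?_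
              rw [Finset.sum_mul]
              exact Finset.sum_congr rfl fun i _ => by ring
      rw [e2, e3]
      simp only [hPd, zero_mul, Finset.sum_const_zero]
    exact (mul_eq_zero.1 key).resolve_left hc
  -- d has a negative coordinate
  have hdneg : ∃ i, d i < 0 := by
    by_contra hcon
    push_neg at hcon
    have hall : ∀ i ∈ Finset.univ, d i = 0 :=
      (Finset.sum_eq_zero_iff_of_nonneg fun i _ => hcon i).1 hdsum
    apply hd0ne
    funext i
    have := hall i.1 (Finset.mem_univ _)
    rw [hdval i] at this
    exact this
  obtain ⟨ineg, hineg⟩ := hdneg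
  set Tn := Finset.univ.filter (fun i => d i < 0) with hTn
  have hTne : Tn.Nonempty := ⟨ineg, by rw [hTn, Finset.mem_filter]; exact ⟨Finset.mem_univ _, hineg⟩⟩
  obtain ⟨i1, hi1T, hi1min⟩ := Finset.exists_min_image Tn (fun i => x i / (-d i)) hTne
  have hdi1 : d i1 < 0 := (Finset.mem_filter.1 hi1T).2
  have hi1S : i1 ∈ S := by
    by_contra h
    rw [hdS0 i1 h] at hdi1
    exact lt_irrefl 0 hdi1
  set t : ℝ := x i1 / (-d i1) with ht
  have htpos : 0 < t := div_pos (hxpos i1 hi1S) (by linarith)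
  set x' : Fin n → ℝ := fun i => x i + t * d i with hx'
  have hx'nn : ∀ i, 0 ≤ x' i := by
    intro i
    show 0 ≤ x i + t * d i
    by_cases hdi : d i < 0
    · have hle : t ≤ x i / -d i := hi1min i (by rw [hTn, Finset.mem_filter]; exact ⟨Finset.mem_univ _, hdi⟩)
      have h2 : t * -d i ≤ x i := (le_div_iff₀ (by linarith)).1 hle
      nlinarith
    · push_neg at hdi
      nlinarith [mul_nonneg htpos.le hdi, hx.1 i]
  have hx'sum : ∑ i, x' i = 1 := by
    have : ∑ i, x' i = ∑ i, x i + t * ∑ i, d i := by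
      rw [Finset.mul_sum, ← Finset.sum_add_distrib]
    rw [this, hdsum, hx.2, mul_zero, add_zero]
  have hx'c : ∀ z, ∑ i, x' i * P i z ≤ c := by
    intro z
    have : ∑ i, x' i * P i z = ∑ i, x i * P i z + t * ∑ i, d i * P i z := by
      rw [Finset.mul_sum, ← Finset.sum_add_distrib]
      refine Finset.sum_congr rfl fun i _ => ?_
      show (x i + t * d i) * P i z = x i * P i z + t * (d i * P i z)
      ring
    rw [this, hPd z, mul_zero, add_zero]
    exact hxc z
  have hx'i1 : x' i1 = 0 := by
    show x i1 + t * d i1 = 0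
    rw [ht]
    have hne : -d i1 ≠ 0 := by linarith
    field_simp
    rw [div_self (ne_of_lt hdi1)]; ring
  have hsubset : Finset.univ.filter (fun i => x' i ≠ 0) ⊆ S.erase i1 := by
    intro i hi
    rw [Finset.mem_filter] at hi
    rw [Finset.mem_erase]
    constructor
    · intro h
      rw [h] at hi
      exact hi.2 hx'i1
    · by_contra h
      apply hi.2
      show x i + t * d i = 0
      rw [hxS0 i h, hdS0 i h, mul_zero, add_zero]
  refine ⟨x', ⟨hx'nn, hx'sum⟩, hx'c, ?_⟩
  calc (Finset.univ.filter (fun i => x' i ≠ 0)).card ≤ (S.erase i1).card :=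
        Finset.card_le_card hsubset
    _ < S.card := Finset.card_erase_lt_of_mem hi1S

lemma reduce {n k : ℕ} (P : Matrix (Fin n) (Fin k) ℝ) (c : ℝ) (hc : c ≠ 0)
    (y : Fin k → ℝ) (hy : y ∈ stdSimplex ℝ (Fin k)) (hyc : ∀ i, c ≤ ∑ z, P i z * y z) :
    ∀ m : ℕ, ∀ x ∈ stdSimplex ℝ (Fin n), (∀ z, ∑ i, x i * P i z ≤ c) →
      (Finset.univ.filter (fun i => x i ≠ 0)).card ≤ k + m →
      ∃ x' ∈ stdSimplex ℝ (Fin n), (∀ z, ∑ i, x' i * P i z ≤ c) ∧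
        (Finset.univ.filter (fun i => x' i ≠ 0)).card ≤ k := by
  intro m
  induction m with
  | zero => exact fun x hx hxc hcard => ⟨x, hx, hxc, by omega⟩
  | succ m ih =>
    intro x hx hxc hcard
    by_cases hle : (Finset.univ.filter (fun i => x i ≠ 0)).card ≤ k
    · exact ⟨x, hx, hxc, hle⟩
    · push_neg at hle
      obtain ⟨x'', hx'', hx''c, hx''card⟩ := pivot_step P c hc y hy hyc x hx hxc hle
      exact ih x'' hx'' hx''c (by omega)

lemma zero_case {n k : ℕ} (hn : 0 < n) (hk : 0 < k) (P : Matrix (Fin n) (Fin k) ℝ)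
    (hP0 : ∀ i z, 0 ≤ P i z) (x : Fin n → ℝ) (hx : x ∈ stdSimplex ℝ (Fin n))
    (hxc : ∀ z, ∑ i, x i * P i z ≤ 0) :
    ∃ x' ∈ stdSimplex ℝ (Fin n), (∀ z, ∑ i, x' i * P i z ≤ 0) ∧
      (Finset.univ.filter (fun i => x' i ≠ 0)).card ≤ k := by
  have hi0 : ∃ i0, x i0 ≠ 0 := by
    by_contra h
    push_neg at h
    have : ∑ i, x i = 0 := Finset.sum_eq_zero fun i _ => h i
    rw [hx.2] at this
    norm_num at this
  obtain ⟨i0, hi0⟩ := hi0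
  have hP0' : ∀ z, P i0 z = 0 := by
    intro z
    have hzero : ∑ i, x i * P i z = 0 :=
      le_antisymm (hxc z) (Finset.sum_nonneg fun i _ => mul_nonneg (hx.1 i) (hP0 i z))
    have := (Finset.sum_eq_zero_iff_of_nonneg fun i _ =>
      mul_nonneg (hx.1 i) (hP0 i z)).1 hzero i0 (Finset.mem_univ i0)
    rcases mul_eq_zero.1 this with h | h
    · exact absurd h hi0
    · exact h
  refine ⟨fun j => if i0 = j then 1 else 0, ite_eq_mem_stdSimplex ℝ i0, ?_, ?_⟩
  · intro z
    have : ∑ i, (if i0 = i then (1:ℝ) else 0) * P i z = P i0 z := by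
      rw [Finset.sum_eq_single i0]
      · simp
      · intro b _ hb
        simp [Ne.symm hb]
      · simp
    rw [this, hP0' z]
  · have : Finset.univ.filter (fun i => (if i0 = i then (1:ℝ) else 0) ≠ 0) = {i0} := by
      ext i
      simp only [Finset.mem_filter, Finset.mem_univ, true_and, Finset.mem_singleton]
      by_cases h : i0 = i <;> simp [h, eq_comm]
    rw [this, Finset.card_singleton]
    omega

theorem stmt6 (n k : ℕ) (hk0 : 0 < k) (hkn : k < n)
    (P : Matrix (Fin n) (Fin k) ℝ) (hP : ∀ z, (fun j => P j z) ∈ simplex (Fin n)) :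
    let U : Matrix (Fin n) (Fin n) ℝ := -(1 : Matrix (Fin n) (Fin n) ℝ)
    ∃ x y, isNash (U * P) x y ∧ ((n:ℝ) - k)/((n:ℝ) * k) ≤ (-1/n : ℝ) - wc U x := by
  intro U
  have hn : 0 < n := hk0.trans hkn
  have hP0 : ∀ i z, 0 ≤ P i z := fun i z => (hP z).1 i
  obtain ⟨c, x0, hx0, y, hy, hx0c, hyc⟩ := duality hn hk0 P
  -- get an optimal x with small support
  have hsmall : ∃ x' ∈ stdSimplex ℝ (Fin n), (∀ z, ∑ i, x' i * P i z ≤ c) ∧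
      (Finset.univ.filter (fun i => x' i ≠ 0)).card ≤ k := by
    by_cases hc : c = 0
    · subst hc
      exact zero_case hn hk0 P hP0 x0 hx0 hx0c
    · exact reduce P c hc y hy hyc n x0 hx0 hx0c
        (le_trans (le_trans (Finset.card_filter_le _ _) (by simp)) (Nat.le_add_left n k))
  obtain ⟨x', hx'Δ, hx'c, hx'supp⟩ := hsmall
  -- payoff computation
  have hU : U = -(1 : Matrix (Fin n) (Fin n) ℝ) := rfl
  have hUP : U * P = -P := by
    rw [hU, Matrix.neg_mul, Matrix.one_mul]
  have hpay : ∀ (a : Fin n → ℝ) (b : Fin k → ℝ),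
      pay (U * P) a b = -∑ i, ∑ z, a i * P i z * b z := by
    intro a b
    show ∑ i, ∑ z, a i * (U * P) i z * b z = _
    rw [hUP]
    rw [← Finset.sum_neg_distrib]
    refine Finset.sum_congr rfl fun i _ => ?_
    rw [← Finset.sum_neg_distrib]
    refine Finset.sum_congr rfl fun z _ => ?_
    rw [Matrix.neg_apply]
    ring
  -- bilinear bounds
  have lemA : ∀ a ∈ stdSimplex ℝ (Fin n), (∀ z, ∑ i, a i * P i z ≤ c) →
      ∀ b ∈ stdSimplex ℝ (Fin k), ∑ i, ∑ z, a i * P i z * b z ≤ c := by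
    intro a _ hac b hb
    calc ∑ i, ∑ z, a i * P i z * b z = ∑ z, ∑ i, a i * P i z * b z := Finset.sum_comm
      _ = ∑ z, (∑ i, a i * P i z) * b z := by
          refine Finset.sum_congr rfl fun z _ => ?_
          rw [Finset.sum_mul]
      _ ≤ ∑ z, c * b z := Finset.sum_le_sum fun z _ =>
          mul_le_mul_of_nonneg_right (hac z) (hb.1 z)
      _ = c := by rw [← Finset.mul_sum, hb.2, mul_one]
  have lemB : ∀ a ∈ stdSimplex ℝ (Fin n), c ≤ ∑ i, ∑ z, a i * P i z * y z := by
    intro a ha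
    calc c = ∑ i, a i * c := by rw [← Finset.sum_mul, ha.2, one_mul]
      _ ≤ ∑ i, a i * ∑ z, P i z * y z := Finset.sum_le_sum fun i _ =>
          mul_le_mul_of_nonneg_left (hyc i) (ha.1 i)
      _ = ∑ i, ∑ z, a i * P i z * y z := by
          refine Finset.sum_congr rfl fun i _ => ?_
          rw [Finset.mul_sum]
          exact Finset.sum_congr rfl fun z _ => by ring
  -- the max coordinate of x'
  obtain ⟨i0, _, hi0max⟩ := Finset.exists_max_image Finset.univ x'
    (Finset.univ_nonempty_iff.2 ⟨⟨0, hn⟩⟩)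
  have hx'supp_sum : ∑ i ∈ Finset.univ.filter (fun i => x' i ≠ 0), x' i = 1 := by
    rw [Finset.sum_filter_ne_zero, hx'Δ.2]
  have hone : (1:ℝ) ≤ (k:ℝ) * x' i0 := by
    have h1 : (1:ℝ) ≤ ((Finset.univ.filter (fun i => x' i ≠ 0)).card : ℝ) * x' i0 := by
      rw [← hx'supp_sum]
      calc ∑ i ∈ Finset.univ.filter (fun i => x' i ≠ 0), x' i
          ≤ ∑ _i ∈ Finset.univ.filter (fun i => x' i ≠ 0), x' i0 :=
            Finset.sum_le_sum fun i _ => hi0max i (Finset.mem_univ i)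
        _ = _ := by rw [Finset.sum_const, nsmul_eq_mul]
    have h2 : 0 ≤ x' i0 := hx'Δ.1 i0
    have h3 : ((Finset.univ.filter (fun i => x' i ≠ 0)).card : ℝ) ≤ (k:ℝ) :=
      Nat.cast_le.2 hx'supp
    nlinarith
  -- worst case value
  have hwcU : ∀ j, ∑ i, x' i * U i j = -x' j := by
    intro j
    rw [hU]
    rw [Finset.sum_eq_single j]
    · simp [Matrix.neg_apply, Matrix.one_apply]
    · intro b _ hb
      simp [Matrix.neg_apply, Matrix.one_apply, hb]
    · simp
  have hwcle : wc U x' ≤ -x' i0 := by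
    apply csInf_le ((Set.finite_range _).bddBelow)
    exact ⟨i0, hwcU i0⟩
  -- assemble
  refine ⟨x', y, ⟨hx'Δ, hy, ?_, ?_⟩, ?_⟩
  · intro x'' hx''
    rw [hpay, hpay]
    have h1 : ∑ i, ∑ z, x' i * P i z * y z ≤ c := lemA x' hx'Δ hx'c y hy
    have h2 : c ≤ ∑ i, ∑ z, x'' i * P i z * y z := lemB x'' hx''
    linarith
  · intro y'' hy''
    rw [hpay, hpay]
    have h1 : ∑ i, ∑ z, x' i * P i z * y'' z ≤ c := lemA x' hx'Δ hx'c y'' hy''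
    have h2 : c ≤ ∑ i, ∑ z, x' i * P i z * y z := lemB x' hx'Δ
    linarith
  · have hkR : (0:ℝ) < k := Nat.cast_pos.2 hk0
    have hnR : (0:ℝ) < n := Nat.cast_pos.2 hn
    have heq : ((n:ℝ) - k)/((n:ℝ) * k) = 1/k - 1/n := by
      rw [eq_comm, div_sub_div _ _ (ne_of_gt hkR) (ne_of_gt hnR), one_mul, mul_one,
        mul_comm (k:ℝ) (n:ℝ)]
    have h1k : (1:ℝ)/k ≤ x' i0 := by
      rw [div_le_iff₀ hkR]
      linarith
    rw [heq]
    have : -1/(n:ℝ) - wc U x' ≥ -1/n + x' i0 := by linarith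
    calc (1:ℝ)/k - 1/n ≤ x' i0 - 1/n := by linarith
      _ = -1/n + x' i0 := by ring
      _ ≤ -1/n - wc U x' := this
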